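/- Let n > 3 be an integer. Then T̃ₙ(2, 0) is invertible and the sign of the (i,j)-entry of T̃ₙ(2, 0)⁻¹ is: +1 if (i,j) ∈ {3,…,n−2}×{3,…,n−2} or (i,j) ∈ {(1,n),(n,1)}; 0 if i ∈ {2, n−1} or j ∈ {2, n−1}, except for (i,j) ∈ {(1,2),(2,1),(n−1,n),(n,n−1)}; and −1 in all remaining cases. -/

import Mathlib

open Matrix BigOperators Finset

/-- The symmetric tridiagonal near-Toeplitz matrix with corner diagonal entries `bt`,
interior diagonal entries `b`, and off-diagonal entries `-1` (0-based indices). -/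
noncomputable def Ttilde (n : ℕ) (b bt : ℝ) : Matrix (Fin n) (Fin n) ℝ :=
  Matrix.of fun i j =>
    if (i : ℕ) = (j : ℕ) then (if (i : ℕ) = 0 ∨ (i : ℕ) = n - 1 then bt else b)
    else if (i : ℕ) + 1 = (j : ℕ) ∨ (j : ℕ) + 1 = (i : ℕ) then (-1 : ℝ) else 0

/-- The maximum absolute row sum (operator norm induced by the sup norm). -/
noncomputable def normInf {n : ℕ} (A : Matrix (Fin n) (Fin n) ℝ) : ℝ :=
  ⨆ i : Fin n, ∑ j : Fin n, |A i j|

noncomputable def Binv (n : ℕ) : Matrix (Fin n) (Fin n) ℝ :=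
  Matrix.of fun i j =>
    (((min (i:ℕ) (j:ℕ) : ℕ) : ℝ) - 1) * ((n:ℝ) - 2 - ((max (i:ℕ) (j:ℕ) : ℕ) : ℝ)) / ((n:ℝ) - 3)

lemma coe_sub_one' (m : ℕ) (i : Fin (m+4)) :
    ((i - 1 : Fin (m+4)) : ℕ) = if (i:ℕ) = 0 then m+3 else (i:ℕ) - 1 := by
  have hs := Fin.coe_sub_one (n := m+3) i
  have hi0 : (i = 0) ↔ (i:ℕ) = 0 := ⟨fun h => by subst h; simp, fun h => Fin.ext (by simp [h])⟩
  simp only [hi0] at hs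
  exact hs

lemma coe_add_one' (m : ℕ) (i : Fin (m+4)) :
    ((i + 1 : Fin (m+4)) : ℕ) = if (i:ℕ) = m+3 then 0 else (i:ℕ) + 1 := by
  have ha := Fin.val_add_one (n := m+3) i
  have hil : (i = Fin.last (m+3)) ↔ (i:ℕ) = m+3 := by simp [Fin.ext_iff, Fin.last]
  simp only [hil] at ha
  exact ha

lemma support_aux (m : ℕ) (i k : Fin (m+4)) (hk1 : k ≠ i - 1) (hk2 : k ≠ i) (hk3 : k ≠ i + 1) :
    Ttilde (m+4) 2 0 i k = 0 := by
  have hs := coe_sub_one' m i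
  have ha := coe_add_one' m i
  have hklt := k.isLt
  have hilt := i.isLt
  have hik : ¬((i:ℕ) = (k:ℕ)) := fun h => hk2 (Fin.ext h.symm)
  have h2 : ¬((i:ℕ)+1 = (k:ℕ)) := by
    intro h
    exact hk3 (Fin.ext (by rw [ha]; split_ifs with c <;> omega)).symm
  have h3 : ¬((k:ℕ)+1 = (i:ℕ)) := by
    intro h
    exact hk1 (Fin.ext (by rw [hs]; split_ifs with c <;> omega)).symm
  simp only [Ttilde, Matrix.of_apply]
  rw [if_neg hik, if_neg (by tauto)]

lemma T_diag (m : ℕ) (i : Fin (m+4)) :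
    Ttilde (m+4) 2 0 i i = if (i:ℕ) = 0 ∨ (i:ℕ) = m+3 then 0 else 2 := by
  simp only [Ttilde, Matrix.of_apply, if_true]
  rw [show m+4-1 = m+3 from by omega]

lemma T_sub (m : ℕ) (i : Fin (m+4)) :
    Ttilde (m+4) 2 0 i (i-1) = if (i:ℕ) = 0 then 0 else -1 := by
  have hs := coe_sub_one' m i
  have hilt := i.isLt
  simp only [Ttilde, Matrix.of_apply]
  by_cases h0 : (i:ℕ) = 0
  · rw [if_pos h0] at hs
    rw [hs, h0, if_neg (by omega), if_neg (by omega), if_pos rfl]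
  · rw [if_neg h0] at hs
    rw [hs, if_neg (by omega), if_pos (by omega), if_neg h0]

lemma T_add (m : ℕ) (i : Fin (m+4)) :
    Ttilde (m+4) 2 0 i (i+1) = if (i:ℕ) = m+3 then 0 else -1 := by
  have ha := coe_add_one' m i
  have hilt := i.isLt
  simp only [Ttilde, Matrix.of_apply]
  by_cases hl : (i:ℕ) = m+3
  · rw [if_pos hl] at ha
    rw [ha, if_neg (by omega), if_neg (by omega), if_pos hl]
  · rw [if_neg hl] at ha
    rw [ha, if_neg (by omega), if_pos (by omega), if_neg hl]

lemma mul_apply_tridiag (m : ℕ) (B : Matrix (Fin (m+4)) (Fin (m+4)) ℝ) (i j : Fin (m+4)) :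
    (Ttilde (m+4) 2 0 * B) i j
      = Ttilde (m+4) 2 0 i (i-1) * B (i-1) j
        + Ttilde (m+4) 2 0 i i * B i j
        + Ttilde (m+4) 2 0 i (i+1) * B (i+1) j := by
  have hs := coe_sub_one' m i
  have ha := coe_add_one' m i
  have hilt := i.isLt
  have d1 : (i - 1 : Fin (m+4)) ≠ i := by
    intro h; apply_fun Fin.val at h; rw [hs] at h; split_ifs at h with c <;> omega
  have d3 : i ≠ i + 1 := by
    intro h; apply_fun Fin.val at h; rw [ha] at h; split_ifs at h with c <;> omega
  have d2 : (i - 1 : Fin (m+4)) ≠ i + 1 := by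
    intro h; apply_fun Fin.val at h; rw [hs, ha] at h; split_ifs at h with c c' <;> omega
  rw [Matrix.mul_apply]
  rw [← Finset.sum_subset (Finset.subset_univ ({i-1, i, i+1} : Finset (Fin (m+4))))
      (fun k _ hk => by
        simp only [Finset.mem_insert, Finset.mem_singleton, not_or] at hk
        rw [support_aux m i k hk.1 hk.2.1 hk.2.2, zero_mul])]
  rw [Finset.sum_insert (by simp [d1, d2]), Finset.sum_insert (by simp [d3]),
    Finset.sum_singleton, add_assoc]

lemma Ttilde_mul_Binv (m : ℕ) : Ttilde (m+4) 2 0 * Binv (m+4) = 1 := by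
  ext i j
  rw [mul_apply_tridiag, Matrix.one_apply, T_sub, T_diag, T_add]
  have hs := coe_sub_one' m i
  have ha := coe_add_one' m i
  have hilt := i.isLt
  have hjlt := j.isLt
  have hij : (i = j) ↔ ((i:ℕ) = (j:ℕ)) := Fin.ext_iff
  have hm0 : (0:ℝ) ≤ (m:ℝ) := Nat.cast_nonneg m
  have hne : (m:ℝ) + 4 - 3 ≠ 0 := by intro h; linarith
  simp only [Binv, Matrix.of_apply]
  by_cases h0 : (i:ℕ) = 0
  · have v2 : ((i + 1 : Fin (m+4)) : ℕ) = 1 := by rw [ha, if_neg (by omega)]; omega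
    rw [if_pos h0, if_pos (Or.inl h0), if_neg (by omega), v2]
    by_cases hb : (j:ℕ) = 0
    · rw [if_pos (hij.mpr (by omega)), hb,
        show min 1 0 = 0 from by omega, show max 1 0 = 1 from by omega]
      push_cast
      field_simp
      ring
    · rw [show min 1 (j:ℕ) = 1 from by omega, if_neg (by rw [hij]; omega)]
      push_cast
      ring
  · by_cases hl : (i:ℕ) = m+3
    · have v1 : ((i - 1 : Fin (m+4)) : ℕ) = m+2 := by rw [hs, if_neg h0]; omega
      rw [if_neg h0, if_pos (Or.inr hl), if_pos hl, v1]
      by_cases hb : (j:ℕ) = m+3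
      · rw [hb, show min (m+2) (m+3) = m+2 from by omega,
          show max (m+2) (m+3) = m+3 from by omega, if_pos (hij.mpr (by omega))]
        push_cast
        field_simp
        ring
      · rw [show max (m+2) (j:ℕ) = m+2 from by omega, if_neg (by rw [hij]; omega)]
        push_cast
        ring
    · obtain ⟨c, hcv⟩ : ∃ c, (i:ℕ) = c + 1 := ⟨(i:ℕ)-1, by omega⟩
      have v1 : ((i - 1 : Fin (m+4)) : ℕ) = c := by rw [hs, if_neg h0]; omega
      have v2 : ((i + 1 : Fin (m+4)) : ℕ) = c+2 := by rw [ha, if_neg hl]; omega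
      rw [if_neg h0, if_neg (by omega), if_neg hl, v1, v2, hcv]
      rcases lt_trichotomy (j:ℕ) (c+1) with hb | hb | hb
      · rw [show min c (j:ℕ) = (j:ℕ) from by omega,
          show min (c+1) (j:ℕ) = (j:ℕ) from by omega,
          show min (c+2) (j:ℕ) = (j:ℕ) from by omega,
          show max c (j:ℕ) = c from by omega,
          show max (c+1) (j:ℕ) = c+1 from by omega,
          show max (c+2) (j:ℕ) = c+2 from by omega,
          if_neg (by rw [hij]; omega)]
        push_cast
        field_simp
        ring
      · rw [show min c (j:ℕ) = c from by omega,
          show min (c+1) (j:ℕ) = c+1 from by omega,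
          show min (c+2) (j:ℕ) = c+1 from by omega,
          show max c (j:ℕ) = c+1 from by omega,
          show max (c+1) (j:ℕ) = c+1 from by omega,
          show max (c+2) (j:ℕ) = c+2 from by omega,
          if_pos (hij.mpr (by omega))]
        push_cast
        field_simp
        ring
      · rw [show min c (j:ℕ) = c from by omega,
          show min (c+1) (j:ℕ) = c+1 from by omega,
          show min (c+2) (j:ℕ) = c+2 from by omega,
          show max c (j:ℕ) = (j:ℕ) from by omega,
          show max (c+1) (j:ℕ) = (j:ℕ) from by omega,
          show max (c+2) (j:ℕ) = (j:ℕ) from by omega,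
          if_neg (by rw [hij]; omega)]
        push_cast
        field_simp
        ring

set_option maxHeartbeats 2000000 in
lemma sign_aux (m a b : ℕ) (ha : a < m+4) (hb : b < m+4) :
    Real.sign ((((min a b : ℕ):ℝ) - 1) * (((m+4:ℕ):ℝ) - 2 - ((max a b : ℕ):ℝ)) / (((m+4:ℕ):ℝ) - 3)) =
        if (2 ≤ a ∧ a ≤ m+4 - 3 ∧ 2 ≤ b ∧ b ≤ m+4 - 3)
            ∨ (a = 0 ∧ b = m+4 - 1) ∨ (a = m+4 - 1 ∧ b = 0)
        then 1
        else if (a = 1 ∨ a = m+4 - 2 ∨ b = 1 ∨ b = m+4 - 2)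
            ∧ ¬((a = 0 ∧ b = 1) ∨ (a = 1 ∧ b = 0)
                ∨ (a = m+4 - 2 ∧ b = m+4 - 1) ∨ (a = m+4 - 1 ∧ b = m+4 - 2))
        then 0 else -1 := by
  have hm0 : (0:ℝ) ≤ (m:ℝ) := Nat.cast_nonneg m
  have hc4 : ((m+4:ℕ):ℝ) = (m:ℝ)+4 := by push_cast; ring
  rw [hc4]
  have hd : (0:ℝ) < (m:ℝ) + 4 - 3 := by linarith
  rcases (show min a b = 0 ∨ min a b = 1 ∨ 2 ≤ min a b by omega) with hp | hp | hp
  · have x1 : ((min a b : ℕ):ℝ) - 1 < 0 := by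
      have : ((min a b : ℕ):ℝ) = 0 := by exact_mod_cast hp
      linarith
    rcases (show max a b = m+3 ∨ max a b = m+2 ∨ max a b ≤ m+1 by omega) with hq | hq | hq
    · have x2 : (m:ℝ) + 4 - 2 - ((max a b : ℕ):ℝ) < 0 := by
        have : ((max a b : ℕ):ℝ) = (m:ℝ)+3 := by rw [hq]; push_cast; ring
        linarith
      rw [Real.sign_of_pos (div_pos (mul_pos_of_neg_of_neg x1 x2) hd)]
      split_ifs with hA hB <;> first | (exfalso; omega) | norm_num
    · have hE : (((min a b : ℕ):ℝ) - 1) * ((m:ℝ) + 4 - 2 - ((max a b : ℕ):ℝ)) / ((m:ℝ) + 4 - 3) = 0 := by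
        rw [hq]; push_cast; ring
      rw [hE, Real.sign_zero]
      split_ifs with hA hB <;> first | (exfalso; omega) | norm_num
    · have x2 : (0:ℝ) < (m:ℝ) + 4 - 2 - ((max a b : ℕ):ℝ) := by
        have : ((max a b : ℕ):ℝ) ≤ (m:ℝ)+1 := by exact_mod_cast hq
        linarith
      rw [Real.sign_of_neg (div_neg_of_neg_of_pos (mul_neg_of_neg_of_pos x1 x2) hd)]
      split_ifs with hA hB <;> first | (exfalso; omega) | norm_num
  · have hE : (((min a b : ℕ):ℝ) - 1) * ((m:ℝ) + 4 - 2 - ((max a b : ℕ):ℝ)) / ((m:ℝ) + 4 - 3) = 0 := by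
      rw [hp]; push_cast; ring
    rw [hE, Real.sign_zero]
    split_ifs with hA hB <;> first | (exfalso; omega) | norm_num
  · have x1 : (0:ℝ) < ((min a b : ℕ):ℝ) - 1 := by
      have : (2:ℝ) ≤ ((min a b : ℕ):ℝ) := by exact_mod_cast hp
      linarith
    rcases (show max a b = m+3 ∨ max a b = m+2 ∨ max a b ≤ m+1 by omega) with hq | hq | hq
    · have x2 : (m:ℝ) + 4 - 2 - ((max a b : ℕ):ℝ) < 0 := by
        have : ((max a b : ℕ):ℝ) = (m:ℝ)+3 := by rw [hq]; push_cast; ring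
        linarith
      rw [Real.sign_of_neg (div_neg_of_neg_of_pos (mul_neg_of_pos_of_neg x1 x2) hd)]
      split_ifs with hA hB <;> first | (exfalso; omega) | norm_num
    · have hE : (((min a b : ℕ):ℝ) - 1) * ((m:ℝ) + 4 - 2 - ((max a b : ℕ):ℝ)) / ((m:ℝ) + 4 - 3) = 0 := by
        rw [hq]; push_cast; ring
      rw [hE, Real.sign_zero]
      split_ifs with hA hB <;> first | (exfalso; omega) | norm_num
    · have x2 : (0:ℝ) < (m:ℝ) + 4 - 2 - ((max a b : ℕ):ℝ) := by
        have : ((max a b : ℕ):ℝ) ≤ (m:ℝ)+1 := by exact_mod_cast hq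
        linarith
      rw [Real.sign_of_pos (div_pos (mul_pos x1 x2) hd)]
      split_ifs with hA hB <;> first | (exfalso; omega) | norm_num

theorem stmt10 (n : ℕ) (hn : 3 < n) :
    IsUnit (Ttilde n 2 0) ∧
    ∀ i j : Fin n,
      Real.sign ((Ttilde n 2 0)⁻¹ i j) =
        if (2 ≤ (i : ℕ) ∧ (i : ℕ) ≤ n - 3 ∧ 2 ≤ (j : ℕ) ∧ (j : ℕ) ≤ n - 3)
            ∨ ((i : ℕ) = 0 ∧ (j : ℕ) = n - 1) ∨ ((i : ℕ) = n - 1 ∧ (j : ℕ) = 0)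
        then 1
        else if ((i : ℕ) = 1 ∨ (i : ℕ) = n - 2 ∨ (j : ℕ) = 1 ∨ (j : ℕ) = n - 2)
            ∧ ¬(((i : ℕ) = 0 ∧ (j : ℕ) = 1) ∨ ((i : ℕ) = 1 ∧ (j : ℕ) = 0)
                ∨ ((i : ℕ) = n - 2 ∧ (j : ℕ) = n - 1) ∨ ((i : ℕ) = n - 1 ∧ (j : ℕ) = n - 2))
        then 0 else -1 := by
  obtain ⟨m, rfl⟩ : ∃ m, n = m + 4 := ⟨n - 4, by omega⟩
  have hmul := Ttilde_mul_Binv m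
  refine ⟨(Matrix.isUnit_iff_isUnit_det _).mpr (Matrix.isUnit_det_of_right_inverse hmul), ?_⟩
  have hinv := Matrix.inv_eq_right_inv hmul
  intro i j
  rw [hinv]
  exact sign_aux m (i:ℕ) (j:ℕ) i.isLt j.isLt
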